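/- Let H be a Hermitian operator on a finite-dimensional complex Hilbert space with smallest eigenvalue λ₀, one-dimensional ground eigenspace spanned by the unit vector |Ψ₀⟩, and spectral gap ε' > 0 (every other eigenvalue is at least λ₀ + ε'). Let 0 < η ≤ 1, set q = 4 log₂(1/η) + 24, and let ε₀ be a real number with |ε₀ − λ₀| ≤ ε'/√q. Define A = exp(−q(H − ε₀)²/(2ε'²)). If |Φ'⟩ is a unit vector with |⟨Ψ₀|Φ'⟩| ≥ 19/20, then the normalized vector |φ⟩ = A|Φ'⟩/‖A|Φ'⟩‖ satisfies ⟨φ|H|φ⟩ ≤ λ₀ + η ε'/100. -/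

import Mathlib

/-- The standard Hermitian inner product on `ι → ℂ`. -/
noncomputable def cinner {ι : Type*} [Fintype ι] (x y : ι → ℂ) : ℂ :=
  ∑ i, (starRingEnd ℂ) (x i) * y i

/-- The Euclidean norm on `ι → ℂ`. -/
noncomputable def evnorm {ι : Type*} [Fintype ι] (v : ι → ℂ) : ℝ :=
  Real.sqrt (cinner v v).re

open scoped Matrix

section Helpers

variable {N : ℕ}

lemma cinner_smul_right (x y : Fin N → ℂ) (c : ℂ) : cinner x (c • y) = c * cinner x y := by
  simp only [cinner, Finset.mul_sum, Pi.smul_apply, smul_eq_mul]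
  exact Finset.sum_congr rfl fun i _ => by ring

lemma cinner_smul_left (x y : Fin N → ℂ) (c : ℂ) :
    cinner (c • x) y = (starRingEnd ℂ) c * cinner x y := by
  simp only [cinner, Finset.mul_sum, Pi.smul_apply, smul_eq_mul, map_mul]
  exact Finset.sum_congr rfl fun i _ => by ring

lemma cinner_conj_symm (x y : Fin N → ℂ) : cinner x y = (starRingEnd ℂ) (cinner y x) := by
  simp [cinner, map_sum, mul_comm]

lemma cinner_sum_left (f : Fin N → (Fin N → ℂ)) (w : Fin N → ℂ) :
    cinner (∑ i, f i) w = ∑ i, cinner (f i) w := by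
  simp only [cinner, Finset.sum_apply, map_sum, Finset.sum_mul]
  exact Finset.sum_comm

lemma cinner_sum_right (w : Fin N → ℂ) (f : Fin N → (Fin N → ℂ)) :
    cinner w (∑ i, f i) = ∑ i, cinner w (f i) := by
  simp only [cinner, Finset.sum_apply, Finset.mul_sum]
  exact Finset.sum_comm

lemma cinner_sum_sum (e : Fin N → (Fin N → ℂ))
    (he : ∀ i j, cinner (e i) (e j) = if i = j then 1 else 0) (c d : Fin N → ℂ) :
    cinner (∑ i, c i • e i) (∑ j, d j • e j) = ∑ i, (starRingEnd ℂ) (c i) * d i := by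
  rw [cinner_sum_left]
  refine Finset.sum_congr rfl fun i _ => ?_
  rw [cinner_smul_left, cinner_sum_right]
  rw [Finset.sum_congr rfl (fun j _ => by rw [cinner_smul_right, he])]
  simp

lemma cinner_mulVec (M : Matrix (Fin N) (Fin N) ℂ) (u w : Fin N → ℂ) :
    cinner u (M.mulVec w) = cinner (Mᴴ.mulVec u) w := by
  simp only [cinner, Matrix.mulVec, dotProduct, Matrix.conjTranspose_apply, map_sum,
    map_mul, Finset.mul_sum, Finset.sum_mul, RingHomCompTriple.comp_apply, RingHom.id_apply]
  rw [Finset.sum_comm]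
  refine Finset.sum_congr rfl fun i _ => Finset.sum_congr rfl fun j _ => ?_
  rw [show (starRingEnd ℂ) (star (M j i)) = M j i from Complex.conj_conj _]
  ring

lemma pow_mulVec_eig (M : Matrix (Fin N) (Fin N) ℂ) (v : Fin N → ℂ) (c : ℂ)
    (h : M.mulVec v = c • v) (n : ℕ) : (M ^ n).mulVec v = c ^ n • v := by
  induction n with
  | zero => simp [Matrix.one_mulVec]
  | succ n ih =>
      rw [pow_succ, ← Matrix.mulVec_mulVec, h, Matrix.mulVec_smul, ih, smul_smul, pow_succ,
        mul_comm c (c ^ n)]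

lemma exp_mulVec_eig (M : Matrix (Fin N) (Fin N) ℂ) (v : Fin N → ℂ) (c : ℂ)
    (h : M.mulVec v = c • v) :
    (NormedSpace.exp M).mulVec v = Complex.exp c • v := by
  letI : SeminormedRing (Matrix (Fin N) (Fin N) ℂ) := Matrix.linftyOpSemiNormedRing
  letI : NormedRing (Matrix (Fin N) (Fin N) ℂ) := Matrix.linftyOpNormedRing
  letI : NormedAlgebra ℂ (Matrix (Fin N) (Fin N) ℂ) := Matrix.linftyOpNormedAlgebra
  have hsum : Summable (fun n : ℕ => ((Nat.factorial n : ℂ))⁻¹ • M ^ n) :=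
    NormedSpace.expSeries_summable' (𝕂 := ℂ) M
  let L : Matrix (Fin N) (Fin N) ℂ →ₗ[ℂ] (Fin N → ℂ) :=
    { toFun := fun P => P.mulVec v
      map_add' := fun P Q => Matrix.add_mulVec P Q v
      map_smul' := fun c P => Matrix.smul_mulVec c P v }
  let Lc : Matrix (Fin N) (Fin N) ℂ →L[ℂ] (Fin N → ℂ) := LinearMap.toContinuousLinearMap L
  have key : (NormedSpace.exp M).mulVec v = Lc (NormedSpace.exp M) := rfl
  rw [key, NormedSpace.exp_eq_tsum (𝕂 := ℂ), ContinuousLinearMap.map_tsum Lc hsum]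
  have hterm : ∀ n : ℕ,
      Lc (((Nat.factorial n : ℂ))⁻¹ • M ^ n) = (((Nat.factorial n : ℂ))⁻¹ * c ^ n) • v := by
    intro n
    show (((Nat.factorial n : ℂ))⁻¹ • M ^ n).mulVec v = _
    rw [Matrix.smul_mulVec, pow_mulVec_eig M v c h n, smul_smul]
  simp_rw [hterm]
  rw [Summable.tsum_smul_const]
  · congr 1
    rw [Complex.exp_eq_exp_ℂ, NormedSpace.exp_eq_tsum (𝕂 := ℂ)]
    simp_rw [smul_eq_mul]
  · have := NormedSpace.expSeries_summable' (𝕂 := ℂ) c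
    simpa [smul_eq_mul] using this

lemma cinner_eq_inner (x y : EuclideanSpace ℂ (Fin N)) :
    cinner x y = @inner ℂ _ _ x y := by
  simp [cinner, PiLp.inner_apply, RCLike.inner_apply, mul_comm]

lemma onb_orth (b : OrthonormalBasis (Fin N) ℂ (EuclideanSpace ℂ (Fin N))) (i j : Fin N) :
    cinner (b i) (b j) = if i = j then 1 else 0 := by
  rw [cinner_eq_inner]
  exact orthonormal_iff_ite.1 b.orthonormal i j

lemma onb_expansion (b : OrthonormalBasis (Fin N) ℂ (EuclideanSpace ℂ (Fin N)))
    (v : Fin N → ℂ) : v = ∑ i, cinner (b i) v • (b i : Fin N → ℂ) := by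
  have h := congrArg WithLp.ofLp (b.sum_repr' (WithLp.toLp 2 v))
  simp_rw [← cinner_eq_inner] at h
  simpa using h.symm

lemma gaussian_decay (ε' η q ε₀ lam0 μ : ℝ) (hε' : 0 < ε') (hη0 : 0 < η) (hη1 : η ≤ 1)
    (hq : q = 4 * Real.logb 2 (1 / η) + 24) (hε₀ : |ε₀ - lam0| ≤ ε' / Real.sqrt q)
    (hμ : lam0 + ε' ≤ μ) :
    Real.exp (-(q / ε' ^ 2) * (μ - ε₀) ^ 2) * (μ - lam0) ≤
      361 / 40000 * η * ε' * Real.exp (-(q / ε' ^ 2) * (lam0 - ε₀) ^ 2) := by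
  have hL : 0 ≤ Real.logb 2 (1 / η) :=
    Real.logb_nonneg (by norm_num) (by rw [le_div_iff₀ hη0]; simpa using hη1)
  have hq24 : 24 ≤ q := by rw [hq]; linarith
  have hq0 : 0 < q := by linarith
  have hsq : 0 < Real.sqrt q := Real.sqrt_pos.2 hq0
  have hsqq : Real.sqrt q * Real.sqrt q = q := Real.mul_self_sqrt hq0.le
  set t := μ - lam0 with ht
  have htε : ε' ≤ t := by rw [ht]; linarith
  have ht0 : 0 < t := lt_of_lt_of_le hε' htε
  set δ := ε₀ - lam0 with hδ
  have hδb : δ ≤ ε' / Real.sqrt q := (abs_le.1 hε₀).2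
  set u := t / ε' with hu
  have hu1 : 1 ≤ u := (one_le_div hε').2 htε
  have htu : t = u * ε' := by rw [hu]; field_simp
  set c : ℝ := q - 2 * Real.sqrt q with hcdef
  have hc : 2 * Real.logb 2 (1 / η) + 10 ≤ c := by
    have h4 : 0 ≤ q - 4 * Real.sqrt q + 4 := by nlinarith [sq_nonneg (Real.sqrt q - 2)]
    rw [hcdef, hq]; rw [hq] at h4; linarith
  have hc1 : (1 : ℝ) ≤ c := by linarith
  clear_value t δ u c
  have hexp1 : c * u ≤ q / ε' ^ 2 * (t * (t - 2 * δ)) := by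
    have h2 : t - 2 * (ε' / Real.sqrt q) ≤ t - 2 * δ := by linarith
    have h1 : q / ε' ^ 2 * (t * (t - 2 * (ε' / Real.sqrt q))) ≤
        q / ε' ^ 2 * (t * (t - 2 * δ)) := by
      have hqe : (0:ℝ) < q / ε' ^ 2 := by positivity
      nlinarith [mul_le_mul_of_nonneg_left h2 ht0.le]
    refine le_trans ?_ h1
    have key : q / ε' ^ 2 * (t * (t - 2 * (ε' / Real.sqrt q))) =
        q * u ^ 2 - 2 * (q / Real.sqrt q) * u := by
      rw [htu]
      have e0 : (u * ε') * ((u * ε') - 2 * (ε' / Real.sqrt q)) =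
          ε' ^ 2 * (u ^ 2 - 2 * u / Real.sqrt q) := by ring
      rw [e0]
      have e1 : ∀ X : ℝ, q / ε' ^ 2 * (ε' ^ 2 * X) = q * X := fun X => by
        have h := (by positivity : (ε':ℝ) ^ 2 ≠ 0)
        field_simp
      rw [e1]; ring
    rw [key, Real.div_sqrt, hcdef]
    nlinarith [hu1, hq0, sq_nonneg (u - 1), mul_le_mul_of_nonneg_left hu1 hq0.le]
  have step1 : u * Real.exp (-(c * u)) ≤ Real.exp (-c) := by
    have h3 : u ≤ Real.exp (c * (u - 1)) := by
      have := Real.add_one_le_exp (c * (u - 1))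
      nlinarith
    calc u * Real.exp (-(c * u)) ≤ Real.exp (c * (u - 1)) * Real.exp (-(c * u)) :=
          mul_le_mul_of_nonneg_right h3 (Real.exp_pos _).le
      _ = Real.exp (-c) := by rw [← Real.exp_add]; ring_nf
  have step2 : Real.exp (-c) ≤ η * Real.exp (-10) := by
    have hlog2 : 0 < Real.log 2 := Real.log_pos (by norm_num)
    have hlog2' : Real.log 2 ≤ 1 := by
      have := Real.log_le_sub_one_of_pos (by norm_num : (0:ℝ) < 2); linarith
    have hlogη : 0 ≤ Real.log (1 / η) := Real.log_nonneg (by rw [le_div_iff₀ hη0]; simpa using hη1)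
    have hLlog : Real.log (1 / η) ≤ Real.logb 2 (1 / η) := by
      rw [← Real.log_div_log, le_div_iff₀ hlog2]
      calc Real.log (1 / η) * Real.log 2 ≤ Real.log (1 / η) * 1 :=
            mul_le_mul_of_nonneg_left hlog2' hlogη
        _ = Real.log (1 / η) := mul_one _
    have h5 : -c ≤ Real.log η + (-10) := by
      have he : Real.log (1 / η) = -Real.log η := by rw [one_div, Real.log_inv]
      rw [he] at hLlog hlogη
      linarith
    calc Real.exp (-c) ≤ Real.exp (Real.log η + (-10)) := Real.exp_le_exp.2 h5
      _ = η * Real.exp (-10) := by rw [Real.exp_add, Real.exp_log hη0]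
  have step3 : Real.exp (-10 : ℝ) ≤ 361 / 40000 := by
    have he2 : (3:ℝ) ≤ Real.exp 2 := by have := Real.add_one_le_exp (2:ℝ); linarith
    have h10 : (243:ℝ) ≤ Real.exp 10 := by
      have h5 : Real.exp 10 = Real.exp 2 ^ (5:ℕ) := by
        rw [← Real.exp_nat_mul]; norm_num
      rw [h5]
      calc (243:ℝ) = 3 ^ (5:ℕ) := by norm_num
        _ ≤ Real.exp 2 ^ (5:ℕ) := pow_le_pow_left₀ (by norm_num) he2 5
    rw [Real.exp_neg]
    rw [inv_le_comm₀ (Real.exp_pos _) (by norm_num)]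
    linarith
  have main : Real.exp (-(q / ε' ^ 2) * (t * (t - 2 * δ))) * t ≤ 361 / 40000 * η * ε' := by
    have e1 : Real.exp (-(q / ε' ^ 2) * (t * (t - 2 * δ))) ≤ Real.exp (-(c * u)) :=
      Real.exp_le_exp.2 (by linarith)
    calc Real.exp (-(q / ε' ^ 2) * (t * (t - 2 * δ))) * t
        ≤ Real.exp (-(c * u)) * t := mul_le_mul_of_nonneg_right e1 ht0.le
      _ = ε' * (u * Real.exp (-(c * u))) := by rw [htu]; ring
      _ ≤ ε' * Real.exp (-c) := mul_le_mul_of_nonneg_left step1 hε'.le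
      _ ≤ ε' * (η * Real.exp (-10)) := mul_le_mul_of_nonneg_left step2 hε'.le
      _ ≤ ε' * (η * (361 / 40000)) :=
          mul_le_mul_of_nonneg_left (mul_le_mul_of_nonneg_left step3 hη0.le) hε'.le
      _ = 361 / 40000 * η * ε' := by ring
  have split : -(q / ε' ^ 2) * (μ - ε₀) ^ 2 =
      -(q / ε' ^ 2) * (t * (t - 2 * δ)) + -(q / ε' ^ 2) * (lam0 - ε₀) ^ 2 := by
    rw [ht, hδ]; ring
  rw [split, Real.exp_add]
  calc Real.exp (-(q / ε' ^ 2) * (t * (t - 2 * δ))) * Real.exp (-(q / ε' ^ 2) * (lam0 - ε₀) ^ 2)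
          * t
      = (Real.exp (-(q / ε' ^ 2) * (t * (t - 2 * δ))) * t) *
          Real.exp (-(q / ε' ^ 2) * (lam0 - ε₀) ^ 2) := by ring
    _ ≤ (361 / 40000 * η * ε') * Real.exp (-(q / ε' ^ 2) * (lam0 - ε₀) ^ 2) :=
        mul_le_mul_of_nonneg_right main (Real.exp_pos _).le

end Helpers

/-! **Statement 17 (energy amplification by a Gaussian filter).**
Let `H` be Hermitian with smallest eigenvalue `λ₀`, one-dimensional ground eigenspace
spanned by the unit vector `Ψ₀`, and spectral gap `ε' > 0` (characterized by:
`H Ψ₀ = λ₀ Ψ₀` and the Rayleigh quotient on the orthogonal complement of `Ψ₀` is at least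
`λ₀ + ε'`).  Let `0 < η ≤ 1`, `q = 4 log₂(1/η) + 24`, and `|ε₀ − λ₀| ≤ ε'/√q`.  Define
`A = exp(−q(H − ε₀)²/(2ε'²))`.  If `Φ'` is a unit vector with `|⟨Ψ₀|Φ'⟩| ≥ 19/20`, then
`φ = A Φ'/‖A Φ'‖` satisfies `⟨φ|H|φ⟩ ≤ λ₀ + η ε'/100`. -/
theorem gaussian_filter_energy {N : ℕ}
    (H : Matrix (Fin N) (Fin N) ℂ) (hH : H.IsHermitian)
    (lam0 : ℝ) (Ψ0 : Fin N → ℂ) (hΨ0unit : cinner Ψ0 Ψ0 = 1)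
    (hground : H.mulVec Ψ0 = (lam0 : ℂ) • Ψ0)
    (ε' : ℝ) (hε' : 0 < ε')
    (hgap : ∀ v : Fin N → ℂ, cinner Ψ0 v = 0 →
      (lam0 + ε') * (cinner v v).re ≤ (cinner v (H.mulVec v)).re)
    (η : ℝ) (hη0 : 0 < η) (hη1 : η ≤ 1)
    (q : ℝ) (hq : q = 4 * Real.logb 2 (1 / η) + 24)
    (ε₀ : ℝ) (hε₀ : |ε₀ - lam0| ≤ ε' / Real.sqrt q)
    (Φ' : Fin N → ℂ) (hΦ'unit : cinner Φ' Φ' = 1)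
    (hov : 19 / 20 ≤ ‖cinner Ψ0 Φ'‖) :
    letI A : Matrix (Fin N) (Fin N) ℂ :=
      NormedSpace.exp ((-((q : ℂ) / (2 * (ε' : ℂ) ^ 2))) •
        ((H - (ε₀ : ℂ) • 1) * (H - (ε₀ : ℂ) • 1)))
    letI φ : Fin N → ℂ := (evnorm (A.mulVec Φ'))⁻¹ • A.mulVec Φ'
    (cinner φ (H.mulVec φ)).re ≤ lam0 + η * ε' / 100 := by
  classical
  set A : Matrix (Fin N) (Fin N) ℂ :=
    NormedSpace.exp ((-((q : ℂ) / (2 * (ε' : ℂ) ^ 2))) •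
      ((H - (ε₀ : ℂ) • 1) * (H - (ε₀ : ℂ) • 1))) with hAdef0
  set φ : Fin N → ℂ := (evnorm (A.mulVec Φ'))⁻¹ • A.mulVec Φ' with hφ0
  set b := hH.eigenvectorBasis with hbdef
  set μ := hH.eigenvalues with hμdef
  set e : Fin N → (Fin N → ℂ) := fun i => ⇑(b i) with hedef
  have horth : ∀ i j, cinner (e i) (e j) = if i = j then 1 else 0 := fun i j => onb_orth b i j
  have hHe : ∀ i, H.mulVec (e i) = ((μ i : ℝ) : ℂ) • e i := by
    intro i
    have h := hH.mulVec_eigenvectorBasis i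
    rw [hedef]
    rw [h]
    funext j
    simp [Complex.real_smul, hμdef, hbdef]
  -- the matrix inside the exponential
  set M : Matrix (Fin N) (Fin N) ℂ :=
    (-((q : ℂ) / (2 * (ε' : ℂ) ^ 2))) • ((H - (ε₀ : ℂ) • 1) * (H - (ε₀ : ℂ) • 1)) with hMdef
  have hAdef : A = NormedSpace.exp M := hAdef0
  set a : Fin N → ℝ := fun i => Real.exp (-(q / (2 * ε' ^ 2)) * (μ i - ε₀) ^ 2) with hadef
  have ha0 : ∀ i, 0 < a i := fun i => Real.exp_pos _
  have hMe : ∀ i, M.mulVec (e i) = ((-(q / (2 * ε' ^ 2)) * (μ i - ε₀) ^ 2 : ℝ) : ℂ) • e i := by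
    intro i
    have h1 : (H - (ε₀ : ℂ) • 1).mulVec (e i) = (((μ i : ℝ) : ℂ) - (ε₀ : ℂ)) • e i := by
      rw [Matrix.sub_mulVec, hHe, Matrix.smul_mulVec, Matrix.one_mulVec, sub_smul]
    rw [hMdef, Matrix.smul_mulVec, ← Matrix.mulVec_mulVec, h1, Matrix.mulVec_smul, h1,
      smul_smul, smul_smul]
    congr 1
    push_cast
    ring
  have hAe : ∀ i, A.mulVec (e i) = ((a i : ℝ) : ℂ) • e i := by
    intro i
    rw [hAdef, exp_mulVec_eig M (e i) _ (hMe i), hadef]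
    rw [← Complex.ofReal_exp]
  -- coordinates
  set x : Fin N → ℂ := fun i => cinner (e i) Φ' with hxdef
  set y : Fin N → ℂ := fun i => cinner (e i) Ψ0 with hydef
  have hΦe : Φ' = ∑ i, x i • e i := onb_expansion b Φ'
  have hΨe : Ψ0 = ∑ i, y i • e i := onb_expansion b Ψ0
  -- A applied to Φ'
  have hAΦ : A.mulVec Φ' = ∑ i, (x i * ((a i : ℝ) : ℂ)) • e i := by
    conv_lhs => rw [hΦe]
    rw [show (A.mulVec (∑ i, x i • e i)) = ∑ i, A.mulVec (x i • e i) from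
      map_sum A.mulVecLin (fun i => x i • e i) Finset.univ]
    refine Finset.sum_congr rfl fun i _ => ?_
    rw [Matrix.mulVec_smul, hAe, smul_smul]
  have hHAΦ : H.mulVec (A.mulVec Φ') = ∑ i, (x i * ((a i : ℝ) : ℂ) * ((μ i : ℝ) : ℂ)) • e i := by
    rw [hAΦ]
    rw [show (H.mulVec (∑ i, (x i * ((a i : ℝ) : ℂ)) • e i)) =
        ∑ i, H.mulVec ((x i * ((a i : ℝ) : ℂ)) • e i) from
      map_sum H.mulVecLin (fun i => (x i * ((a i : ℝ) : ℂ)) • e i) Finset.univ]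
    refine Finset.sum_congr rfl fun i _ => ?_
    rw [Matrix.mulVec_smul, hHe, smul_smul]
  -- weights
  set w : Fin N → ℝ := fun i => Complex.normSq (x i) * a i ^ 2 with hwdef
  have haeq : ∀ i, a i = Real.exp (-(q / (2 * ε' ^ 2)) * (μ i - ε₀) ^ 2) := fun i => rfl
  have hweq : ∀ i, w i = Complex.normSq (x i) * a i ^ 2 := fun i => rfl
  have hw0 : ∀ i, 0 ≤ w i := fun i => mul_nonneg (Complex.normSq_nonneg _) (sq_nonneg _)
  have hconjmul : ∀ z : ℂ, (starRingEnd ℂ) z * z = (Complex.normSq z : ℂ) := fun z => by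
    rw [mul_comm, Complex.mul_conj]
  have hSc : cinner (A.mulVec Φ') (A.mulVec Φ') = ((∑ i, w i : ℝ) : ℂ) := by
    rw [hAΦ, cinner_sum_sum e horth, Complex.ofReal_sum]
    refine Finset.sum_congr rfl fun i _ => ?_
    rw [hconjmul, hweq i, Complex.normSq_mul, Complex.normSq_ofReal]
    push_cast
    ring
  have hEc : cinner (A.mulVec Φ') (H.mulVec (A.mulVec Φ')) = ((∑ i, w i * μ i : ℝ) : ℂ) := by
    rw [hHAΦ, hAΦ]
    rw [show (∑ i, (x i * ((a i : ℝ) : ℂ) * ((μ i : ℝ) : ℂ)) • e i) =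
        ∑ i, (((μ i : ℝ) : ℂ) * (x i * ((a i : ℝ) : ℂ))) • e i by
      refine Finset.sum_congr rfl fun i _ => by ring_nf]
    rw [cinner_sum_sum e horth, Complex.ofReal_sum]
    refine Finset.sum_congr rfl fun i _ => ?_
    rw [show (starRingEnd ℂ) (x i * ((a i : ℝ) : ℂ)) * (((μ i : ℝ) : ℂ) * (x i * ((a i : ℝ) : ℂ)))
        = ((starRingEnd ℂ) (x i * ((a i : ℝ) : ℂ)) * (x i * ((a i : ℝ) : ℂ))) * ((μ i : ℝ) : ℂ)
        from by ring]
    rw [hconjmul, hweq i, Complex.normSq_mul, Complex.normSq_ofReal]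
    push_cast
    ring
  -- Parseval
  have hx1 : ∑ i, Complex.normSq (x i) = 1 := by
    have h := hΦ'unit
    rw [hΦe, cinner_sum_sum e horth] at h
    have h2 : ((∑ i, Complex.normSq (x i) : ℝ) : ℂ) = 1 := by
      rw [← h]
      push_cast
      exact Finset.sum_congr rfl fun i _ => (hconjmul (x i)).symm
    exact_mod_cast h2
  have hy1 : ∑ i, Complex.normSq (y i) = 1 := by
    have h := hΨ0unit
    rw [hΨe, cinner_sum_sum e horth] at h
    have h2 : ((∑ i, Complex.normSq (y i) : ℝ) : ℂ) = 1 := by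
      rw [← h]
      push_cast
      exact Finset.sum_congr rfl fun i _ => (hconjmul (y i)).symm
    exact_mod_cast h2
  have hyeq : ∀ i, y i = cinner (e i) Ψ0 := fun i => rfl
  clear_value A φ b μ e M a x y w
  -- classification of eigenvalues
  have hclass : ∀ i, (y i ≠ 0 ∧ μ i = lam0) ∨ (y i = 0 ∧ lam0 + ε' ≤ μ i) := by
    intro i
    by_cases hyi : y i = 0
    · right
      refine ⟨hyi, ?_⟩
      have h0 : cinner Ψ0 (e i) = 0 := by
        rw [cinner_conj_symm]
        rw [← hyeq i, hyi, map_zero]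
      have hcee : cinner (e i) (e i) = 1 := by rw [horth i i]; simp
      have hg := hgap (e i) h0
      rw [hHe i, cinner_smul_right, hcee, mul_one, Complex.one_re, Complex.ofReal_re, mul_one]
        at hg
      linarith [hg]
    · left
      refine ⟨hyi, ?_⟩
      have h1 : cinner (e i) (H.mulVec Ψ0) = (lam0 : ℂ) * y i := by
        rw [hground, cinner_smul_right, ← hyeq i]
      have h2 : cinner (e i) (H.mulVec Ψ0) = ((μ i : ℝ) : ℂ) * y i := by
        rw [cinner_mulVec, hH.eq, hHe, cinner_smul_left, Complex.conj_ofReal, ← hyeq i]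
      have h3 : (((μ i : ℝ) : ℂ) - (lam0 : ℂ)) * y i = 0 := by
        rw [sub_mul, ← h1, ← h2, sub_self]
      rcases mul_eq_zero.1 h3 with h | h
      · have : ((μ i : ℝ) : ℂ) = (lam0 : ℂ) := sub_eq_zero.1 h
        exact_mod_cast this
      · exact absurd h hyi
  -- the good set
  set G : Finset (Fin N) := Finset.univ.filter (fun i => y i ≠ 0) with hGdef
  have hμG : ∀ i ∈ G, μ i = lam0 := by
    intro i hi
    rw [hGdef, Finset.mem_filter] at hi
    rcases hclass i with ⟨_, h⟩ | ⟨h, _⟩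
    · exact h
    · exact absurd h hi.2
  have hμB : ∀ i, i ∉ G → lam0 + ε' ≤ μ i := by
    intro i hi
    rw [hGdef, Finset.mem_filter] at hi
    push_neg at hi
    rcases hclass i with ⟨h, _⟩ | ⟨_, h⟩
    · exact absurd (hi (Finset.mem_univ i)) h
    · exact h
  -- overlap bound
  have hovG : (361 / 400 : ℝ) ≤ ∑ i ∈ G, Complex.normSq (x i) := by
    have hov' : cinner Ψ0 Φ' = ∑ i ∈ G, (starRingEnd ℂ) (y i) * x i := by
      rw [hΨe, hΦe, cinner_sum_sum e horth]
      exact (Finset.sum_filter_of_ne fun i _ hne => by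
        intro hy0
        apply hne
        rw [hy0, map_zero, zero_mul]).symm
    have h1 : (19 / 20 : ℝ) ≤ ‖∑ i ∈ G, (starRingEnd ℂ) (y i) * x i‖ := by
      rw [← hov']; exact hov
    have h2 : ‖∑ i ∈ G, (starRingEnd ℂ) (y i) * x i‖ ≤ ∑ i ∈ G, ‖y i‖ * ‖x i‖ := by
      refine le_trans (norm_sum_le _ _) (le_of_eq (Finset.sum_congr rfl fun i _ => ?_))
      rw [norm_mul, RCLike.norm_conj]
    have h3 : ∑ i ∈ G, ‖y i‖ * ‖x i‖ ≤
        Real.sqrt (∑ i ∈ G, ‖y i‖ ^ 2) * Real.sqrt (∑ i ∈ G, ‖x i‖ ^ 2) :=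
      Real.sum_mul_le_sqrt_mul_sqrt _ _ _
    have hn2 : ∀ z : ℂ, ‖z‖ ^ 2 = Complex.normSq z := fun z => by
      rw [← Complex.sq_norm]
    have h4 : ∑ i ∈ G, ‖y i‖ ^ 2 ≤ 1 := by
      rw [← hy1]
      refine le_trans (le_of_eq (Finset.sum_congr rfl fun i _ => hn2 (y i))) ?_
      exact Finset.sum_le_sum_of_subset_of_nonneg (Finset.subset_univ G)
        (fun i _ _ => Complex.normSq_nonneg _)
    have h5 : Real.sqrt (∑ i ∈ G, ‖y i‖ ^ 2) ≤ 1 := by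
      rw [show (1:ℝ) = Real.sqrt 1 from (Real.sqrt_one).symm]
      exact Real.sqrt_le_sqrt h4
    have h6 : (19 / 20 : ℝ) ≤ Real.sqrt (∑ i ∈ G, ‖x i‖ ^ 2) := by
      have hs0 : 0 ≤ Real.sqrt (∑ i ∈ G, ‖x i‖ ^ 2) := Real.sqrt_nonneg _
      nlinarith [h1.trans (h2.trans h3)]
    have h7 : (361 / 400 : ℝ) ≤ ∑ i ∈ G, ‖x i‖ ^ 2 := by
      have hsum0 : (0:ℝ) ≤ ∑ i ∈ G, ‖x i‖ ^ 2 :=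
        Finset.sum_nonneg fun i _ => sq_nonneg _
      have hss := Real.sq_sqrt hsum0
      nlinarith [h6, Real.sqrt_nonneg (∑ i ∈ G, ‖x i‖ ^ 2)]
    refine le_trans h7 (le_of_eq (Finset.sum_congr rfl fun i _ => hn2 (x i)))
  -- value of a on the good set
  set a0 : ℝ := Real.exp (-(q / (2 * ε' ^ 2)) * (lam0 - ε₀) ^ 2) with ha0def
  have ha0pos : 0 < a0 := Real.exp_pos _
  have haG : ∀ i ∈ G, a i = a0 := by
    intro i hi
    rw [haeq i, hμG i hi, ha0def]
  -- lower bound on total weight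
  have hSlow : (361 / 400) * a0 ^ 2 ≤ ∑ i, w i := by
    have h1 : ∑ i ∈ G, w i ≤ ∑ i, w i :=
      Finset.sum_le_sum_of_subset_of_nonneg (Finset.subset_univ G) fun i _ _ => hw0 i
    have h2 : (361 / 400) * a0 ^ 2 ≤ ∑ i ∈ G, w i := by
      have : ∑ i ∈ G, w i = (∑ i ∈ G, Complex.normSq (x i)) * a0 ^ 2 := by
        rw [Finset.sum_mul]
        exact Finset.sum_congr rfl fun i hi => by rw [hweq i, haG i hi]
      rw [this]
      exact mul_le_mul_of_nonneg_right hovG (sq_nonneg _)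
    linarith
  have hS0 : 0 < ∑ i, w i := lt_of_lt_of_le (by positivity) hSlow
  -- square of a i as single exponential
  have ha2 : ∀ i, a i ^ 2 = Real.exp (-(q / ε' ^ 2) * (μ i - ε₀) ^ 2) := by
    intro i
    rw [haeq i, sq, ← Real.exp_add]
    congr 1
    field_simp
    ring
  have ha02 : a0 ^ 2 = Real.exp (-(q / ε' ^ 2) * (lam0 - ε₀) ^ 2) := by
    rw [ha0def, sq, ← Real.exp_add]
    congr 1
    field_simp
    ring
  -- the key sum inequality
  have hmain : ∑ i, w i * μ i ≤ (lam0 + η * ε' / 100) * ∑ i, w i := by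
    have hsplit : ∑ i, w i * (μ i - (lam0 + η * ε' / 100)) =
        (∑ i ∈ G, w i * (μ i - (lam0 + η * ε' / 100))) +
        ∑ i ∈ Finset.univ.filter (fun i => ¬ (y i ≠ 0)), w i * (μ i - (lam0 + η * ε' / 100)) := by
      rw [hGdef]
      exact (Finset.sum_filter_add_sum_filter_not Finset.univ _ _).symm
    have hGpart : ∑ i ∈ G, w i * (μ i - (lam0 + η * ε' / 100)) ≤
        -(η * ε' / 100) * ((361 / 400) * a0 ^ 2) := by
      have e1 : ∑ i ∈ G, w i * (μ i - (lam0 + η * ε' / 100)) =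
          -(η * ε' / 100 * a0 ^ 2) * ∑ i ∈ G, Complex.normSq (x i) := by
        rw [Finset.mul_sum]
        refine Finset.sum_congr rfl fun i hi => ?_
        rw [hweq i, hμG i hi, haG i hi]
        ring
      rw [e1]
      have hpos : (0:ℝ) < η * ε' / 100 * a0 ^ 2 := by positivity
      nlinarith [hovG]
    have hBpart : ∑ i ∈ Finset.univ.filter (fun i => ¬ (y i ≠ 0)),
        w i * (μ i - (lam0 + η * ε' / 100)) ≤ 361 / 40000 * η * ε' * a0 ^ 2 := by
      have hperterm : ∀ i ∈ Finset.univ.filter (fun i => ¬ (y i ≠ 0)),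
          w i * (μ i - (lam0 + η * ε' / 100)) ≤
            Complex.normSq (x i) * (361 / 40000 * η * ε' * a0 ^ 2) := by
        intro i hi
        have hiG : i ∉ G := by
          rw [Finset.mem_filter] at hi
          rw [hGdef, Finset.mem_filter]
          intro hc
          exact hi.2 hc.2
        have hμi := hμB i hiG
        have hd := gaussian_decay ε' η q ε₀ lam0 (μ i) hε' hη0 hη1 hq hε₀ hμi
        rw [← ha2, ← ha02] at hd
        have h1 : w i * (μ i - (lam0 + η * ε' / 100)) ≤ w i * (μ i - lam0) := by
          have : μ i - (lam0 + η * ε' / 100) ≤ μ i - lam0 := by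
            have : 0 < η * ε' / 100 := by positivity
            linarith
          exact mul_le_mul_of_nonneg_left this (hw0 i)
        refine le_trans h1 ?_
        rw [hweq i]
        rw [show Complex.normSq (x i) * a i ^ 2 * (μ i - lam0) =
            Complex.normSq (x i) * (a i ^ 2 * (μ i - lam0)) from by ring]
        exact mul_le_mul_of_nonneg_left hd (Complex.normSq_nonneg _)
      refine le_trans (Finset.sum_le_sum hperterm) ?_
      have hsub : ∑ i ∈ Finset.univ.filter (fun i => ¬ (y i ≠ 0)), Complex.normSq (x i) ≤ 1 := by
        rw [← hx1]
        exact Finset.sum_le_sum_of_subset_of_nonneg (Finset.filter_subset _ _)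
          fun i _ _ => Complex.normSq_nonneg _
      have hK : (0:ℝ) ≤ 361 / 40000 * η * ε' * a0 ^ 2 := by positivity
      calc ∑ i ∈ Finset.univ.filter (fun i => ¬ (y i ≠ 0)), Complex.normSq (x i) *
            (361 / 40000 * η * ε' * a0 ^ 2)
          = (∑ i ∈ Finset.univ.filter (fun i => ¬ (y i ≠ 0)), Complex.normSq (x i)) *
            (361 / 40000 * η * ε' * a0 ^ 2) := (Finset.sum_mul _ _ _).symm
        _ ≤ 1 * (361 / 40000 * η * ε' * a0 ^ 2) := mul_le_mul_of_nonneg_right hsub hK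
        _ = 361 / 40000 * η * ε' * a0 ^ 2 := one_mul _
    have hkey : ∑ i, w i * (μ i - (lam0 + η * ε' / 100)) ≤ 0 := by
      rw [hsplit]
      have h0 : -(η * ε' / 100) * ((361 / 400) * a0 ^ 2) + 361 / 40000 * η * ε' * a0 ^ 2 = 0 := by
        ring
      exact le_trans (add_le_add hGpart hBpart) (le_of_eq h0)
    have hexpand : ∑ i, w i * (μ i - (lam0 + η * ε' / 100)) =
        (∑ i, w i * μ i) - (lam0 + η * ε' / 100) * ∑ i, w i := by
      rw [Finset.mul_sum, ← Finset.sum_sub_distrib]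
      exact Finset.sum_congr rfl fun i _ => by ring
    linarith [hexpand ▸ hkey]
  -- finish: compute the Rayleigh quotient of φ
  have hevn : evnorm (A.mulVec Φ') = Real.sqrt (∑ i, w i) := by
    rw [evnorm, hSc, Complex.ofReal_re]
  set r : ℝ := (Real.sqrt (∑ i, w i))⁻¹ with hrdef
  have hφdef : φ = ((r : ℝ) : ℂ) • A.mulVec Φ' := by
    rw [hφ0, hevn]
    funext j
    show (Real.sqrt (∑ i, w i))⁻¹ • (A.mulVec Φ') j = ((r : ℝ) : ℂ) * (A.mulVec Φ') j
    rw [hrdef]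
    exact Complex.real_smul
  have hcφ : (cinner φ (H.mulVec φ)).re = r ^ 2 * ∑ i, w i * μ i := by
    rw [hφdef, Matrix.mulVec_smul, cinner_smul_left, cinner_smul_right, Complex.conj_ofReal, hEc]
    rw [show ((r:ℝ):ℂ) * (((r:ℝ):ℂ) * ((∑ i, w i * μ i : ℝ) : ℂ)) =
        (((r ^ 2 * ∑ i, w i * μ i : ℝ)) : ℂ) from by push_cast; ring]
    rw [Complex.ofReal_re]
  rw [hcφ]
  have hr2 : r ^ 2 = (∑ i, w i)⁻¹ := by
    rw [hrdef, ← Real.sqrt_inv, Real.sq_sqrt (inv_nonneg.2 hS0.le)]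
  rw [hr2]
  rw [inv_mul_le_iff₀ hS0]
  calc ∑ i, w i * μ i ≤ (lam0 + η * ε' / 100) * ∑ i, w i := hmain
    _ = (∑ i, w i) * (lam0 + η * ε' / 100) := by ring
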